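/- For all $n \ge 0$, the Fibonacci number $f_{n+1}$ satisfies $f_{n+1} = (-1)^n \sum_{k=0}^n \sum_{i=0}^{\lfloor (n-k)/2 \rfloor} (-2)^k \binom{n-i}{i} \binom{n-2i}{k}$. -/

import Mathlib

open Finset

lemma fib_sum_choose (n : ℕ) :
    Nat.fib (n + 1) = ∑ i ∈ range (n + 1), Nat.choose (n - i) i := by
  rw [Nat.fib_succ_eq_sum_choose, Finset.Nat.sum_antidiagonal_eq_sum_range_succ
    (f := fun a b => Nat.choose a b), ← Finset.sum_range_reflect]
  exact Finset.sum_congr rfl fun i hi => by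
    simp only [Finset.mem_range] at hi
    (congr 1; omega)

lemma aux_inner (n i : ℕ) :
    ∑ k ∈ range (n + 1), (-2 : ℤ) ^ k * (Nat.choose (n - 2 * i) k : ℤ) =
      (-1 : ℤ) ^ (n - 2 * i) := by
  have h1 : ∑ k ∈ range (n - 2 * i + 1), (-2 : ℤ) ^ k * (Nat.choose (n - 2 * i) k : ℤ) =
      ((-2 : ℤ) + 1) ^ (n - 2 * i) := by
    rw [add_pow]
    exact Finset.sum_congr rfl fun k _ => by ring
  rw [← Finset.sum_subset (Finset.range_subset_range.2 (by omega : n - 2 * i + 1 ≤ n + 1))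
    (fun k _ hk => by
      rw [Nat.choose_eq_zero_of_lt (by simp at hk ⊢; omega)]
      ring), h1]
  norm_num

theorem fib_eq_alternating_binomial_sum (n : ℕ) :
    (Nat.fib (n + 1) : ℤ) =
      (-1 : ℤ) ^ n *
        ∑ k ∈ Finset.range (n + 1),
          ∑ i ∈ Finset.range ((n - k) / 2 + 1),
            (-2 : ℤ) ^ k * (Nat.choose (n - i) i : ℤ) * (Nat.choose (n - 2 * i) k : ℤ) := by
  have hext : ∀ k ∈ range (n + 1),
      ∑ i ∈ range ((n - k) / 2 + 1),
          (-2 : ℤ) ^ k * (Nat.choose (n - i) i : ℤ) * (Nat.choose (n - 2 * i) k : ℤ) =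
      ∑ i ∈ range (n + 1),
          (-2 : ℤ) ^ k * (Nat.choose (n - i) i : ℤ) * (Nat.choose (n - 2 * i) k : ℤ) := by
    intro k hk
    apply Finset.sum_subset (Finset.range_subset_range.2 (by simp at hk; omega))
    intro i hi hi'
    simp only [Finset.mem_range] at hi hi' hk
    by_cases h2 : 2 * i ≤ n
    · have : n - 2 * i < k := by omega
      rw [Nat.choose_eq_zero_of_lt this]; ring
    · rw [Nat.choose_eq_zero_of_lt (show n - i < i by omega)]; ring
  rw [Finset.sum_congr rfl hext, Finset.sum_comm]
  have : ∀ i ∈ range (n + 1),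
      ∑ k ∈ range (n + 1),
          (-2 : ℤ) ^ k * (Nat.choose (n - i) i : ℤ) * (Nat.choose (n - 2 * i) k : ℤ) =
      (Nat.choose (n - i) i : ℤ) * (-1 : ℤ) ^ (n - 2 * i) := by
    intro i _
    rw [← aux_inner n i, Finset.mul_sum]
    exact Finset.sum_congr rfl fun k _ => by ring
  rw [Finset.sum_congr rfl this, Finset.mul_sum, fib_sum_choose]
  push_cast
  apply Finset.sum_congr rfl
  intro i hi
  simp only [Finset.mem_range] at hi
  by_cases h2 : 2 * i ≤ n
  · have : (-1 : ℤ) ^ n * (-1 : ℤ) ^ (n - 2 * i) = 1 := by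
      rw [← pow_add, (by omega : n + (n - 2 * i) = 2 * (n - i)), pow_mul]
      norm_num
    rw [← mul_assoc, mul_comm ((-1:ℤ)^n), mul_assoc, this, mul_one]
  · rw [Nat.choose_eq_zero_of_lt (show n - i < i by omega)]; simp
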